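/- An integral domain D is a ∗-Prüfer domain if and only if for all nonzero fractional ideals A and nonzero finitely generated fractional ideals F with A ⊆ F^∗, there exists a nonzero fractional ideal B with A^∗ = (BF)^∗. -/

import Mathlib

open FractionalIdeal

/-- A star operation on an integral domain `D` with fraction field `K`, acting on
fractional ideals: it fixes `D`, is extensive, monotone, idempotent (all on nonzero
ideals), and commutes with multiplication by nonzero principal fractional ideals. -/
structure StarOp (D : Type*) [CommRing D] [IsDomain D] (K : Type*) [Field K]
    [Algebra D K] [IsFractionRing D K] where
  star : FractionalIdeal (nonZeroDivisors D) K → FractionalIdeal (nonZeroDivisors D) K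
  star_one : star 1 = 1
  le_star : ∀ {A}, A ≠ 0 → A ≤ star A
  star_mono : ∀ {A B}, A ≠ 0 → A ≤ B → star A ≤ star B
  star_idem : ∀ {A}, A ≠ 0 → star (star A) = star A
  star_smul : ∀ {A : FractionalIdeal (nonZeroDivisors D) K} (x : K), x ≠ 0 → A ≠ 0 →
    star (spanSingleton (nonZeroDivisors D) x * A) = spanSingleton (nonZeroDivisors D) x * star A

variable {D K : Type*} [CommRing D] [IsDomain D] [Field K] [Algebra D K] [IsFractionRing D K]

namespace StarAux

lemma exists_mem_ne_zero {A : FractionalIdeal (nonZeroDivisors D) K} (hA : A ≠ 0) :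
    ∃ x ∈ A, x ≠ (0 : K) := by
  by_contra h
  push_neg at h
  exact hA (FractionalIdeal.eq_zero_iff.mpr h)

lemma mul_ne_zero' {A B : FractionalIdeal (nonZeroDivisors D) K} (hA : A ≠ 0) (hB : B ≠ 0) :
    A * B ≠ 0 := by
  obtain ⟨a, haA, ha⟩ := exists_mem_ne_zero hA
  obtain ⟨b, hbB, hb⟩ := exists_mem_ne_zero hB
  intro h
  have : a * b ∈ A * B := FractionalIdeal.mul_mem_mul haA hbB
  rw [h] at this
  exact mul_ne_zero ha hb ((FractionalIdeal.mem_zero_iff _).mp this)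

lemma inv_ne_zero' {F : FractionalIdeal (nonZeroDivisors D) K} (hF : F ≠ 0) :
    F⁻¹ ≠ 0 := by
  obtain ⟨a, haS, ha⟩ := F.isFractional
  have hmem : algebraMap D K a ∈ F⁻¹ := by
    rw [FractionalIdeal.mem_inv_iff hF]
    intro y hy
    obtain ⟨c, hc⟩ := ha y hy
    rw [FractionalIdeal.mem_one_iff]
    rw [Algebra.smul_def] at hc
    exact ⟨c, hc⟩
  intro h
  rw [h, FractionalIdeal.mem_zero_iff] at hmem
  exact nonZeroDivisors.coe_ne_zero ⟨a, haS⟩ (IsFractionRing.to_map_eq_zero_iff.mp hmem)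

/-- Key lemma: `(A^∗ B)^∗ = (A B)^∗` for nonzero `A`, `B`. -/
lemma star_star_mul (s : StarOp D K) {A B : FractionalIdeal (nonZeroDivisors D) K}
    (hA : A ≠ 0) (hB : B ≠ 0) : s.star (s.star A * B) = s.star (A * B) := by
  have hAB : A * B ≠ 0 := mul_ne_zero' hA hB
  have hsA : s.star A ≠ 0 := fun h => by
    have := s.le_star hA
    rw [h] at this; exact hA (le_antisymm this (FractionalIdeal.zero_le A))
  apply le_antisymm
  · -- star A * B ≤ star (A * B), then apply mono and idem
    have key : s.star A * B ≤ s.star (A * B) := by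
      rw [FractionalIdeal.mul_le]
      intro i hi j hj
      by_cases hjz : j = 0
      · subst hjz; simpa using zero_mem (s.star (A * B))
      · have h1 : spanSingleton (nonZeroDivisors D) j * A ≤ A * B := by
          rw [mul_comm A B]
          exact mul_left_mono (a := A) (FractionalIdeal.spanSingleton_le_iff_mem.mpr hj)
        have h2 : spanSingleton (nonZeroDivisors D) j * s.star A ≤ s.star (A * B) := by
          rw [← s.star_smul j hjz hA]
          exact s.star_mono (mul_ne_zero' (FractionalIdeal.spanSingleton_ne_zero_iff.mpr hjz) hA) h1
        have : i * j ∈ spanSingleton (nonZeroDivisors D) j * s.star A := by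
          rw [mul_comm i j]
          exact FractionalIdeal.mul_mem_mul (FractionalIdeal.mem_spanSingleton_self _ _) hi
        exact h2 this
    calc s.star (s.star A * B) ≤ s.star (s.star (A * B)) :=
          s.star_mono (mul_ne_zero' hsA hB) key
      _ = s.star (A * B) := s.star_idem hAB
  · exact s.star_mono hAB (mul_left_mono (a := B) (s.le_star hA))

lemma star_mul_star (s : StarOp D K) {A B : FractionalIdeal (nonZeroDivisors D) K}
    (hA : A ≠ 0) (hB : B ≠ 0) : s.star (A * s.star B) = s.star (A * B) := by
  rw [mul_comm A (s.star B), mul_comm A B]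
  exact star_star_mul s hB hA

lemma star_ne_zero (s : StarOp D K) {A : FractionalIdeal (nonZeroDivisors D) K}
    (hA : A ≠ 0) : s.star A ≠ 0 := fun h => by
  have := s.le_star hA
  rw [h] at this; exact hA (le_antisymm this (FractionalIdeal.zero_le A))

end StarAux

open StarAux

/-- `D` is a `∗`-Prüfer domain iff whenever `A ⊆ F^∗` with `F` nonzero finitely
generated and `A` nonzero, `A^∗ = (BF)^∗` for some nonzero fractional ideal `B`. -/
theorem starPrufer_iff_factor (s : StarOp D K) :
    (∀ F : FractionalIdeal (nonZeroDivisors D) K, F ≠ 0 → (F : Submodule D K).FG → s.star (F * F⁻¹) = 1) ↔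
    (∀ (A F : FractionalIdeal (nonZeroDivisors D) K), A ≠ 0 → F ≠ 0 → (F : Submodule D K).FG → A ≤ s.star F →
      ∃ B : FractionalIdeal (nonZeroDivisors D) K, B ≠ 0 ∧ s.star A = s.star (B * F)) := by
  constructor
  · intro h A F hA hF hFG _
    have hFi : F⁻¹ ≠ 0 := inv_ne_zero' hF
    refine ⟨A * F⁻¹, mul_ne_zero' hA hFi, ?_⟩
    have h1 : A * F⁻¹ * F = A * (F * F⁻¹) := by ring
    rw [h1, ← star_mul_star s hA (mul_ne_zero' hF hFi), h F hF hFG, mul_one]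
  · intro h F hF hFG
    obtain ⟨x, hxF, hx⟩ := exists_mem_ne_zero hF
    have hsx : spanSingleton (nonZeroDivisors D) x ≠ 0 :=
      FractionalIdeal.spanSingleton_ne_zero_iff.mpr hx
    have hle : spanSingleton (nonZeroDivisors D) x ≤ s.star F :=
      le_trans (FractionalIdeal.spanSingleton_le_iff_mem.mpr hxF) (s.le_star hF)
    obtain ⟨B, hB, hBF⟩ := h _ F hsx hF hFG hle
    have hBFne : B * F ≠ 0 := mul_ne_zero' hB hF
    have hstar_x : s.star (spanSingleton (nonZeroDivisors D) x) =
        spanSingleton (nonZeroDivisors D) x := by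
      have := s.star_smul (A := 1) x hx (one_ne_zero)
      rwa [mul_one, s.star_one, mul_one] at this
    rw [hstar_x] at hBF
    -- B * F ≤ span x, so x⁻¹ • B ≤ F⁻¹
    have hBF_le : B * F ≤ spanSingleton (nonZeroDivisors D) x := by
      rw [hBF]; exact s.le_star hBFne
    have hxinv : (x⁻¹ : K) ≠ 0 := inv_ne_zero hx
    set xi := spanSingleton (nonZeroDivisors D) (x⁻¹ : K) with hxi
    have hxi_ne : xi ≠ 0 := FractionalIdeal.spanSingleton_ne_zero_iff.mpr hxinv
    have hxiB_le : xi * B ≤ F⁻¹ := by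
      rw [FractionalIdeal.inv_eq, FractionalIdeal.le_div_iff_mul_le hF, mul_assoc]
      calc xi * (B * F) ≤ xi * spanSingleton (nonZeroDivisors D) x :=
            mul_right_mono (a := xi) hBF_le
        _ = 1 := by
            rw [hxi, FractionalIdeal.spanSingleton_mul_spanSingleton,
              inv_mul_cancel₀ hx, FractionalIdeal.spanSingleton_one]
    have hFine : F⁻¹ ≠ 0 := inv_ne_zero' hF
    have key : (1 : FractionalIdeal (nonZeroDivisors D) K) ≤ s.star (F * F⁻¹) := by
      have h1 : s.star (xi * (B * F)) = xi * s.star (B * F) := s.star_smul _ hxinv hBFne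
      have h2 : xi * s.star (B * F) = 1 := by
        rw [← hBF, hxi, FractionalIdeal.spanSingleton_mul_spanSingleton,
          inv_mul_cancel₀ hx, FractionalIdeal.spanSingleton_one]
      have h3 : xi * (B * F) ≤ F⁻¹ * F := by
        rw [← mul_assoc]
        exact mul_left_mono (a := F) hxiB_le
      calc (1 : FractionalIdeal (nonZeroDivisors D) K) = s.star (xi * (B * F)) := by
            rw [h1, h2]
        _ ≤ s.star (F⁻¹ * F) := s.star_mono (mul_ne_zero' hxi_ne hBFne) h3
        _ = s.star (F * F⁻¹) := by rw [mul_comm]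
    have hle1 : s.star (F * F⁻¹) ≤ 1 := by
      have : F * F⁻¹ ≤ 1 := by
        rw [mul_comm, FractionalIdeal.inv_eq]
        exact (FractionalIdeal.le_div_iff_mul_le hF).mp le_rfl
      calc s.star (F * F⁻¹) ≤ s.star 1 := s.star_mono (mul_ne_zero' hF hFine) this
        _ = 1 := s.star_one
    exact le_antisymm hle1 key
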